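/- The vector space $\Omega(\lambda,\alpha,h) = \mathbb{C}[t,\partial]$ with the action $d_m(\partial^i f) = \lambda^m (\partial - m)^i \big( (\partial + m h(t) - m(m-1)\alpha \frac{h(t)-h(\alpha)}{t-\alpha}) f(t) - m(t - m\alpha) f'(t) \big)$ and $c(\partial^i f) = 0$ is a module over the Virasoro algebra, i.e., $[d_m, d_k] w = (k-m) d_{m+k} w$ for all $m, k \in \mathbb{Z}$ and all $w \in \mathbb{C}[t,\partial]$. -/

import Mathlib

noncomputable section
open Polynomial

/-- The exact polynomial quotient `(h(t) - h(α)) / (t - α)`. -/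
def hquot (h : ℂ[X]) (α : ℂ) : ℂ[X] := (h - C (h.eval α)) /ₘ (X - C α)

/-- The action of `d_m` on `Ω(λ,α,h) = ℂ[t,∂]`, modelled as `(ℂ[t])[∂]`
(polynomials in the outer variable `∂` with coefficients in `ℂ[t]`): on `∂^i f(t)`,
`d_m(∂^i f) = λ^m (∂-m)^i ((∂ + m h(t) - m(m-1) α (h(t)-h(α))/(t-α)) f(t) - m (t - mα) f'(t))`,
extended linearly; `c` acts by `0`. -/
def omegaD (lam α : ℂ) (h : ℂ[X]) (m : ℤ) (p : Polynomial ℂ[X]) : Polynomial ℂ[X] :=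
  lam ^ m • p.sum fun i f =>
    ((X : Polynomial ℂ[X]) - Polynomial.C (C (m : ℂ))) ^ i *
      ((X : Polynomial ℂ[X]) * Polynomial.C f +
        Polynomial.C ((C (m : ℂ) * h - C ((m : ℂ) * ((m : ℂ) - 1) * α) * hquot h α) * f
          - C (m : ℂ) * ((X - C ((m : ℂ) * α)) * derivative f)))

namespace StmtAux

def Lop (α : ℂ) (h : ℂ[X]) (m : ℂ) (f : ℂ[X]) : ℂ[X] :=
  (C m * h - C (m * (m - 1) * α) * hquot h α) * f - C m * ((X - C (m * α)) * derivative f)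

lemma hq_mul (α : ℂ) (h : ℂ[X]) : (X - C α) * hquot h α = h - C (h.eval α) := by
  have hdvd : (X - C α) ∣ (h - C (h.eval α)) := X_sub_C_dvd_sub_C_eval
  have hm : (X - C α).Monic := monic_X_sub_C α
  have h0 : (h - C (h.eval α)) %ₘ (X - C α) = 0 :=
    (Polynomial.modByMonic_eq_zero_iff_dvd hm).mpr hdvd
  have := Polynomial.modByMonic_add_div (h - C (h.eval α)) (X - C α)
  rw [h0, zero_add] at this
  exact this

lemma hderiv (α : ℂ) (h : ℂ[X]) :
    derivative h = hquot h α + (X - C α) * derivative (hquot h α) := by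
  have := congrArg derivative (hq_mul α h)
  simp only [derivative_mul, derivative_sub, derivative_X, derivative_C, sub_zero,
    one_mul, zero_mul] at this
  linear_combination -this

lemma Lop_zero (α : ℂ) (h : ℂ[X]) (M : ℂ) : Lop α h M 0 = 0 := by simp [Lop]

lemma Lop_add (α : ℂ) (h : ℂ[X]) (M : ℂ) (f g : ℂ[X]) :
    Lop α h M (f + g) = Lop α h M f + Lop α h M g := by
  simp only [Lop, derivative_add]; ring

lemma Lop_Cmul (α : ℂ) (h : ℂ[X]) (M a : ℂ) (f : ℂ[X]) :
    Lop α h M (C a * f) = C a * Lop α h M f := by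
  simp only [Lop, derivative_C_mul]; ring

lemma Lkey (α : ℂ) (h : ℂ[X]) (M K : ℂ) (f : ℂ[X]) :
    Lop α h M (Lop α h K f) - Lop α h K (Lop α h M f)
      + C K * Lop α h K f - C M * Lop α h M f
    = C (K - M) * Lop α h (M + K) f := by
  have hd := hderiv α h
  simp only [Lop, derivative_sub, derivative_mul, derivative_add, derivative_C,
    derivative_X, derivative_one, map_mul, map_sub, map_add, map_one, zero_mul, mul_zero,
    zero_sub, sub_zero, zero_add, add_zero, mul_one, one_mul]
  linear_combination (C α * C K * C M * (C M - C K)) * f * hd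

end StmtAux

namespace StmtAux

lemma smulP (a : ℂ) (p : Polynomial ℂ[X]) : a • p = Polynomial.C (C a) * p := by
  rw [Algebra.smul_def]
  congr 1

lemma omegaD_monomial (lam α : ℂ) (h : ℂ[X]) (m : ℤ) (i : ℕ) (f : ℂ[X]) :
    omegaD lam α h m (monomial i f)
      = lam ^ m • (((X : Polynomial ℂ[X]) - Polynomial.C (C (m : ℂ))) ^ i *
          ((X : Polynomial ℂ[X]) * Polynomial.C f + Polynomial.C (Lop α h (m : ℂ) f))) := by
  unfold omegaD Lop
  rw [Polynomial.sum_monomial_index]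
  simp [hquot]

lemma omegaD_add (lam α : ℂ) (h : ℂ[X]) (m : ℤ) (p q : Polynomial ℂ[X]) :
    omegaD lam α h m (p + q) = omegaD lam α h m p + omegaD lam α h m q := by
  unfold omegaD
  rw [Polynomial.sum_add_index, smul_add]
  · intro i; simp
  · intro n b₁ b₂
    simp only [derivative_add, map_add, map_sub, map_mul]
    ring

lemma omegaD_smul (lam α : ℂ) (h : ℂ[X]) (m : ℤ) (a : ℂ) (p : Polynomial ℂ[X]) :
    omegaD lam α h m (a • p) = a • omegaD lam α h m p := by
  induction p using Polynomial.induction_on' with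
  | add p q hp hq => rw [smul_add, omegaD_add, hp, hq, omegaD_add, smul_add]
  | monomial n f =>
    rw [smul_monomial, omegaD_monomial, omegaD_monomial]
    have : a • f = C a * f := by rw [Polynomial.smul_eq_C_mul]
    rw [this, Lop_Cmul]
    rw [smulP, smulP, smulP]
    simp only [map_mul]
    ring

end StmtAux

namespace StmtAux

lemma omegaD_X_mul (lam α : ℂ) (h : ℂ[X]) (m : ℤ) (p : Polynomial ℂ[X]) :
    omegaD lam α h m ((X : Polynomial ℂ[X]) * p)
      = ((X : Polynomial ℂ[X]) - Polynomial.C (C (m : ℂ))) * omegaD lam α h m p := by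
  induction p using Polynomial.induction_on' with
  | add p q hp hq => rw [mul_add, omegaD_add, hp, hq, omegaD_add, mul_add]
  | monomial n f =>
    rw [X_mul_monomial, omegaD_monomial, omegaD_monomial]
    rw [smulP, smulP]
    ring

lemma omegaD_shift (lam α : ℂ) (h : ℂ[X]) (m : ℤ) (c : ℂ) (p : Polynomial ℂ[X]) :
    omegaD lam α h m (((X : Polynomial ℂ[X]) - Polynomial.C (C c)) * p)
      = ((X : Polynomial ℂ[X]) - Polynomial.C (C ((m : ℂ) + c))) * omegaD lam α h m p := by
  have e : ((X : Polynomial ℂ[X]) - Polynomial.C (C c)) * p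
      = (X : Polynomial ℂ[X]) * p + (-c) • p := by
    rw [smulP]; simp only [map_neg]; ring
  rw [e, omegaD_add, omegaD_X_mul, omegaD_smul, smulP]
  simp only [map_add, map_neg]
  ring

lemma omegaD_shift_pow (lam α : ℂ) (h : ℂ[X]) (m : ℤ) (c : ℂ) (i : ℕ) (p : Polynomial ℂ[X]) :
    omegaD lam α h m ((((X : Polynomial ℂ[X]) - Polynomial.C (C c)) ^ i) * p)
      = (((X : Polynomial ℂ[X]) - Polynomial.C (C ((m : ℂ) + c))) ^ i) * omegaD lam α h m p := by
  induction i with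
  | zero => simp
  | succ n ih =>
    have e : (((X : Polynomial ℂ[X]) - Polynomial.C (C c)) ^ (n+1)) * p
        = ((X : Polynomial ℂ[X]) - Polynomial.C (C c)) * ((((X : Polynomial ℂ[X]) - Polynomial.C (C c)) ^ n) * p) := by
      ring
    rw [e, omegaD_shift, ih, pow_succ]
    ring

end StmtAux

namespace StmtAux

lemma omegaD_lin (lam α : ℂ) (h : ℂ[X]) (m : ℤ) (f g : ℂ[X]) :
    omegaD lam α h m ((X : Polynomial ℂ[X]) * Polynomial.C f + Polynomial.C g)
      = lam ^ m • ((((X : Polynomial ℂ[X]) - Polynomial.C (C (m : ℂ))) *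
            ((X : Polynomial ℂ[X]) * Polynomial.C f + Polynomial.C (Lop α h (m : ℂ) f))) +
          ((X : Polynomial ℂ[X]) * Polynomial.C g + Polynomial.C (Lop α h (m : ℂ) g))) := by
  have e : (X : Polynomial ℂ[X]) * Polynomial.C f + Polynomial.C g
      = monomial 1 f + monomial 0 g := by
    rw [← Polynomial.monomial_zero_left, ← Polynomial.monomial_zero_left, X_mul_monomial]
  rw [e, omegaD_add, omegaD_monomial, omegaD_monomial, ← smul_add, pow_one, pow_zero, one_mul]

end StmtAux


open StmtAux in
/-- `Ω(λ,α,h)` is a module over the Virasoro algebra: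
`[d_m, d_k] w = (k - m) d_{m+k} w` for all `m, k ∈ ℤ` and all `w ∈ ℂ[t,∂]`
(the central term vanishes since `c` acts by `0`). -/
theorem stmt3 (lam : ℂ) (hlam : lam ≠ 0) (α : ℂ) (h : ℂ[X]) (m k : ℤ) (w : Polynomial ℂ[X]) :
    omegaD lam α h m (omegaD lam α h k w) - omegaD lam α h k (omegaD lam α h m w) =
      ((k - m : ℤ) : ℂ) • omegaD lam α h (m + k) w := by

  induction w using Polynomial.induction_on' with
  | add p q hp hq =>
    rw [omegaD_add, omegaD_add, omegaD_add, omegaD_add, omegaD_add, smul_add]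
    simp only [smulP] at hp hq ⊢
    linear_combination hp + hq
  | monomial i f =>
    rw [omegaD_monomial lam α h k i f, omegaD_monomial lam α h m i f,
      omegaD_monomial lam α h (m+k) i f,
      omegaD_smul, omegaD_smul, omegaD_shift_pow, omegaD_shift_pow,
      omegaD_lin, omegaD_lin]
    have key := Lkey α h (m : ℂ) (k : ℂ) f
    have keyC := congrArg (Polynomial.C : ℂ[X] → Polynomial ℂ[X]) key
    simp only [map_sub, map_add, map_mul] at keyC
    rw [zpow_add₀ hlam]
    simp only [smulP, add_comm ((k : ℤ) : ℂ) ((m : ℤ) : ℂ)]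
    push_cast
    simp only [map_sub, map_mul]
    linear_combination (Polynomial.C (C (lam ^ m)) * Polynomial.C (C (lam ^ k)) *
      ((X : Polynomial ℂ[X]) - Polynomial.C (C ((m:ℂ)+(k:ℂ)))) ^ i) * keyC
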